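/- The G_1-saturation of L_1 × L_1 is Zariski dense in Z_1 = {(x_1,...,x_m,y_1,...,y_m) ∈ C^{2m} : x_1y_1 = ··· = x_my_m}; consequently, any G_1-invariant polynomial on Z_1 vanishing on L_1 × L_1 = {(d,...,d,e,...,e)} vanishes on all of Z_1. -/

import Mathlib

open MvPolynomial

/-- The Zariski topology on `ℂ^{2m}` (coordinates indexed by `Fin m ⊕ Fin m`). -/
def zariskiDouble (m : ℕ) : TopologicalSpace (Fin m ⊕ Fin m → ℂ) :=
  TopologicalSpace.generateFrom
    {U | ∃ p : MvPolynomial (Fin m ⊕ Fin m) ℂ, U = {v | eval v p ≠ 0}}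

/-- `Z₁ ⊆ ℂ^{2m}`: the zero set of the moment map for dimension vector `δ`,
cut out by `x₁y₁ = x₂y₂ = ⋯ = x_my_m`. -/
def Zone (m : ℕ) : Set (Fin m ⊕ Fin m → ℂ) :=
  {v | ∀ i j : Fin m, v (Sum.inl i) * v (Sum.inr i) = v (Sum.inl j) * v (Sum.inr j)}

/-- The action of `G₁ = (ℂˣ)^m` on `ℂ^{2m}`:
`x_i ↦ (g (i+1))⁻¹ x_i g_i`, `y_i ↦ (g i)⁻¹ y_i g_{i+1}` (indices mod `m`). -/
noncomputable def actOne (m : ℕ) [NeZero m] (g : Fin m → ℂˣ) (v : Fin m ⊕ Fin m → ℂ) :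
    Fin m ⊕ Fin m → ℂ :=
  Sum.elim (fun i => ((g (i + 1) : ℂ))⁻¹ * v (Sum.inl i) * (g i : ℂ))
    (fun i => ((g i : ℂ))⁻¹ * v (Sum.inr i) * (g (i + 1) : ℂ))

lemma mem_sat {m : ℕ} [NeZero m] (w : Fin m ⊕ Fin m → ℂ) (hw : w ∈ Zone m)
    (hx : ∀ i, w (Sum.inl i) ≠ 0) :
    ∃ (g : Fin m → ℂˣ) (d e : ℂ),
      w = actOne m g (Sum.elim (fun _ => d) (fun _ => e)) := by
  obtain ⟨n, rfl⟩ : ∃ k, m = k + 1 := ⟨m - 1, (Nat.succ_pred_eq_of_pos (NeZero.pos m)).symm⟩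
  set x : ℕ → ℂ := open Fin.NatCast in fun k => w (Sum.inl (k : Fin (n + 1))) with hxdef
  have hxk : ∀ k, x k ≠ 0 := fun k => hx _
  have hxi : ∀ i : Fin (n + 1), x i.val = w (Sum.inl i) := by
    intro i; simp [hxdef, Fin.cast_val_eq_self]
  have hP : ∏ j ∈ Finset.range (n + 1), x j ≠ 0 :=
    Finset.prod_ne_zero_iff.mpr fun j _ => hxk j
  obtain ⟨d, hd⟩ := IsAlgClosed.exists_pow_nat_eq (k := ℂ)
    (∏ j ∈ Finset.range (n + 1), x j) (Nat.succ_pos n)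
  have hd0 : d ≠ 0 := by
    intro h; apply hP; rw [← hd, h, zero_pow (Nat.succ_ne_zero n)]
  set G : ℕ → ℂ := fun k => d ^ k / ∏ j ∈ Finset.range k, x j with hGdef
  have hG0 : ∀ k, G k ≠ 0 := fun k =>
    div_ne_zero (pow_ne_zero _ hd0) (Finset.prod_ne_zero_iff.mpr fun j _ => hxk j)
  have key : ∀ i : Fin (n + 1), w (Sum.inl i) * G ((i + 1 : Fin (n + 1)).val) = d * G i.val := by
    intro i
    rcases eq_or_ne i (Fin.last n) with h | h
    · subst h
      have h1 : ((Fin.last n + 1 : Fin (n + 1))).val = 0 := by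
        rw [Fin.val_add_one]; simp
      rw [h1]
      have hG00 : G 0 = 1 := by simp [hGdef]
      rw [hG00, mul_one]
      have hlast : (Fin.last n).val = n := rfl
      rw [hlast]
      have hdn : d * G n = x n := by
        rw [hGdef]
        have hPi : ∏ j ∈ Finset.range n, x j ≠ 0 :=
          Finset.prod_ne_zero_iff.mpr fun j _ => hxk j
        rw [Finset.prod_range_succ, Nat.succ_eq_add_one, pow_succ] at hd
        field_simp
        linear_combination hd
      rw [hdn]
      exact (hxi (Fin.last n)).symm
    · have hv1 : ((i + 1 : Fin (n + 1))).val = i.val + 1 := by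
        rw [Fin.val_add_one]; simp [h]
      rw [hv1, hGdef]
      simp only []
      rw [Finset.prod_range_succ, hxi i]
      have hPi : ∏ j ∈ Finset.range i.val, x j ≠ 0 :=
        Finset.prod_ne_zero_iff.mpr fun j _ => hxk j
      field_simp [hx i]
      ring
  refine ⟨fun i => Units.mk0 (G i.val) (hG0 _), d,
    (w (Sum.inl 0) * w (Sum.inr 0)) / d, ?_⟩
  funext k
  cases k with
  | inl i =>
    simp only [actOne, Sum.elim_inl, Units.val_mk0]
    have hk := key i
    have h2 : w (Sum.inl i) = d * G i.val / G ((i + 1 : Fin (n + 1)).val) :=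
      (eq_div_iff (hG0 _)).mpr hk
    rw [h2, div_eq_mul_inv]; ring
  | inr i =>
    simp only [actOne, Sum.elim_inr, Units.val_mk0]
    have ht : w (Sum.inl i) * w (Sum.inr i) = w (Sum.inl 0) * w (Sum.inr 0) := hw i 0
    have h1 : G ((i + 1 : Fin (n + 1)).val) = d * G i.val / w (Sum.inl i) :=
      (eq_div_iff (hx i)).mpr (by linear_combination key i)
    have hPi : ∏ j ∈ Finset.range i.val, x j ≠ 0 :=
      Finset.prod_ne_zero_iff.mpr fun j _ => hxk j
    rw [h1, ← ht]
    have hGi : G i.val ≠ 0 := hG0 _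
    have hB : w (Sum.inr i) * ((G i.val)⁻¹ * G i.val) * (d⁻¹ * d) *
        ((w (Sum.inl i))⁻¹ * w (Sum.inl i)) =
        (G i.val)⁻¹ * (w (Sum.inl i) * w (Sum.inr i) / d) * (d * G i.val / w (Sum.inl i)) := by
      ring
    rw [← hB, inv_mul_cancel₀ hGi, inv_mul_cancel₀ hd0, inv_mul_cancel₀ (hx i),
      mul_one, mul_one, mul_one]


noncomputable def curveC (m : ℕ) (v : Fin m ⊕ Fin m → ℂ) (ε : ℂ) : Fin m ⊕ Fin m → ℂ :=
  Sum.elim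
    (fun i => if v (Sum.inl i) = 0 then
      (if v (Sum.inr i) = 0 then ε else ε ^ 2 / v (Sum.inr i)) else v (Sum.inl i))
    (fun i => if v (Sum.inl i) = 0 then
      (if v (Sum.inr i) = 0 then ε else v (Sum.inr i)) else ε ^ 2 / v (Sum.inl i))

lemma curveC_zero {m : ℕ} (v : Fin m ⊕ Fin m → ℂ)
    (h0 : ∀ i, v (Sum.inl i) * v (Sum.inr i) = 0) : curveC m v 0 = v := by
  funext k
  cases k with
  | inl i =>
    simp only [curveC, Sum.elim_inl]
    split_ifs with h1 h2
    · exact h1.symm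
    · simp [h1]
    · rfl
  | inr i =>
    simp only [curveC, Sum.elim_inr]
    split_ifs with h1 h2
    · exact h2.symm
    · rfl
    · have : v (Sum.inr i) = 0 := by
        rcases mul_eq_zero.mp (h0 i) with h | h
        · exact absurd h h1
        · exact h
      simp [this]

lemma curveC_prod {m : ℕ} (v : Fin m ⊕ Fin m → ℂ) (ε : ℂ) (i : Fin m) :
    curveC m v ε (Sum.inl i) * curveC m v ε (Sum.inr i) = ε ^ 2 := by
  simp only [curveC, Sum.elim_inl, Sum.elim_inr]
  split_ifs with h1 h2
  · ring
  · rw [div_mul_cancel₀ _ h2]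
  · rw [mul_comm, div_mul_cancel₀ _ h1]

lemma curveC_x_ne {m : ℕ} (v : Fin m ⊕ Fin m → ℂ) {ε : ℂ} (hε : ε ≠ 0) (i : Fin m) :
    curveC m v ε (Sum.inl i) ≠ 0 := by
  simp only [curveC, Sum.elim_inl]
  split_ifs with h1 h2
  · exact hε
  · exact div_ne_zero (pow_ne_zero _ hε) h2
  · exact h1

lemma curveC_poly {m : ℕ} (v : Fin m ⊕ Fin m → ℂ) (p : MvPolynomial (Fin m ⊕ Fin m) ℂ) :
    ∃ q : Polynomial ℂ, ∀ ε, eval (curveC m v ε) p = q.eval ε := by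
  classical
  set cpoly : Fin m ⊕ Fin m → Polynomial ℂ :=
    Sum.elim
      (fun i => if v (Sum.inl i) = 0 then
        (if v (Sum.inr i) = 0 then Polynomial.X
          else Polynomial.C (v (Sum.inr i))⁻¹ * Polynomial.X ^ 2)
        else Polynomial.C (v (Sum.inl i)))
      (fun i => if v (Sum.inl i) = 0 then
        (if v (Sum.inr i) = 0 then Polynomial.X else Polynomial.C (v (Sum.inr i)))
        else Polynomial.C (v (Sum.inl i))⁻¹ * Polynomial.X ^ 2) with hcp
  have hc : ∀ ε k, curveC m v ε k = (cpoly k).eval ε := by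
    intro ε k
    cases k with
    | inl i =>
      simp only [curveC, hcp, Sum.elim_inl]
      split_ifs <;> simp [div_eq_inv_mul]
    | inr i =>
      simp only [curveC, hcp, Sum.elim_inr]
      split_ifs <;> simp [div_eq_inv_mul]
  refine ⟨eval₂ Polynomial.C cpoly p, fun ε => ?_⟩
  have h1 := MvPolynomial.eval₂_comp_left (Polynomial.evalRingHom ε)
    (Polynomial.C : ℂ →+* Polynomial ℂ) cpoly p
  have h2 : (Polynomial.evalRingHom ε).comp (Polynomial.C : ℂ →+* Polynomial ℂ) =
      RingHom.id ℂ := by ext a; simp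
  rw [h2] at h1
  have hcf : curveC m v ε = fun k => (cpoly k).eval ε := funext (hc ε)
  rw [hcf]
  exact h1.symm

lemma preim_lemma (m : ℕ) (F : ℂ → (Fin m ⊕ Fin m → ℂ))
    (hF : ∀ p : MvPolynomial (Fin m ⊕ Fin m) ℂ, ∃ q : Polynomial ℂ,
      ∀ ε, eval (F ε) p = q.eval ε)
    (V : Set (Fin m ⊕ Fin m → ℂ)) (hV : (zariskiDouble m).IsOpen V) :
    F ⁻¹' V = ∅ ∨ (F ⁻¹' V)ᶜ.Finite := by
  have hV' : TopologicalSpace.GenerateOpen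
      {U | ∃ p : MvPolynomial (Fin m ⊕ Fin m) ℂ, U = {v | eval v p ≠ 0}} V := hV
  clear hV
  induction hV' with
  | basic U hU =>
    obtain ⟨p, rfl⟩ := hU
    obtain ⟨q, hq⟩ := hF p
    rcases eq_or_ne q 0 with h | h
    · left
      ext ε; simp [hq, h]
    · right
      apply (Polynomial.finite_setOf_isRoot h).subset
      intro ε hε
      simp only [Set.mem_compl_iff, Set.mem_preimage, Set.mem_setOf_eq, not_not] at hε
      rw [hq] at hε
      exact hε
  | univ => right; simp
  | inter U1 U2 h1 h2 ih1 ih2 =>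
    rcases ih1 with h | h
    · left; rw [Set.preimage_inter, h, Set.empty_inter]
    · rcases ih2 with h' | h'
      · left; rw [Set.preimage_inter, h', Set.inter_empty]
      · right
        rw [Set.preimage_inter, Set.compl_inter]
        exact h.union h'
  | sUnion S hS ih =>
    by_cases h : ∀ s ∈ S, F ⁻¹' s = ∅
    · left
      rw [Set.eq_empty_iff_forall_notMem]
      intro ε hε
      obtain ⟨s, hs, hmem⟩ := hε
      have hε' : ε ∈ F ⁻¹' s := hmem
      rw [h s hs] at hε'
      exact hε'
    · push_neg at h
      obtain ⟨s, hs, hne⟩ := h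
      rcases ih s hs with h' | h'
      · exact absurd h' (Set.nonempty_iff_ne_empty.mp hne)
      · right
        apply h'.subset
        intro ε hε
        simp only [Set.mem_compl_iff, Set.mem_preimage] at hε ⊢
        exact fun hmem => hε ⟨s, hs, hmem⟩

lemma dense_sat (m : ℕ) [NeZero m] :
    @Dense (Zone m) (@instTopologicalSpaceSubtype _ _ (zariskiDouble m))
      {v : Zone m | ∃ (g : Fin m → ℂˣ) (d e : ℂ),
        (v : Fin m ⊕ Fin m → ℂ) =
          actOne m g (Sum.elim (fun _ => d) (fun _ => e))} := by
  letI : TopologicalSpace (Fin m ⊕ Fin m → ℂ) := zariskiDouble m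
  rw [dense_iff_inter_open]
  rintro U hU ⟨⟨v, hv⟩, hvU⟩
  rw [isOpen_induced_iff] at hU
  obtain ⟨V, hVo, rfl⟩ := hU
  have hvV : v ∈ V := hvU
  by_cases hall : ∀ i, v (Sum.inl i) ≠ 0
  · exact ⟨⟨v, hv⟩, hvU, mem_sat v hv hall⟩
  · push_neg at hall
    obtain ⟨i0, hi0⟩ := hall
    have h0 : ∀ i, v (Sum.inl i) * v (Sum.inr i) = 0 := fun i => by
      rw [hv i i0, hi0, zero_mul]
    have hor := preim_lemma m (curveC m v) (curveC_poly v) V hVo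
    have h0mem : (0 : ℂ) ∈ curveC m v ⁻¹' V := by
      rw [Set.mem_preimage, curveC_zero v h0]; exact hvV
    rcases hor with h | h
    · rw [h] at h0mem; exact absurd h0mem (Set.notMem_empty 0)
    · obtain ⟨ε, hε⟩ := (h.union (Set.finite_singleton 0)).infinite_compl.nonempty
      rw [Set.mem_compl_iff, Set.mem_union, not_or] at hε
      obtain ⟨hε1, hε2⟩ := hε
      rw [Set.mem_compl_iff, not_not] at hε1
      have hεne : ε ≠ 0 := fun h' => hε2 (by simp [h'])
      have hZ : curveC m v ε ∈ Zone m := fun i j => by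
        rw [curveC_prod, curveC_prod]
      exact ⟨⟨curveC m v ε, hZ⟩, hε1, mem_sat _ hZ (curveC_x_ne v hεne)⟩

theorem stmt_12 (m : ℕ) [NeZero m] :
    @Dense (Zone m) (@instTopologicalSpaceSubtype _ _ (zariskiDouble m))
      {v : Zone m | ∃ (g : Fin m → ℂˣ) (d e : ℂ),
        (v : Fin m ⊕ Fin m → ℂ) =
          actOne m g (Sum.elim (fun _ => d) (fun _ => e))} ∧
    (∀ f : MvPolynomial (Fin m ⊕ Fin m) ℂ,
      (∀ (g : Fin m → ℂˣ) (v : Fin m ⊕ Fin m → ℂ), v ∈ Zone m →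
        eval (actOne m g v) f = eval v f) →
      (∀ d e : ℂ, eval (Sum.elim (fun _ : Fin m => d) (fun _ : Fin m => e)) f = 0) →
      ∀ v ∈ Zone m, eval v f = 0) := by
  refine ⟨dense_sat m, ?_⟩
  intro f hinv hvan v hv
  by_contra hne
  letI : TopologicalSpace (Fin m ⊕ Fin m → ℂ) := zariskiDouble m
  have hUo : IsOpen {w : Zone m | eval (w : Fin m ⊕ Fin m → ℂ) f ≠ 0} := by
    rw [isOpen_induced_iff]
    refine ⟨{v | eval v f ≠ 0}, TopologicalSpace.GenerateOpen.basic _ ⟨f, rfl⟩, rfl⟩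
  have hUne : ({w : Zone m | eval (w : Fin m ⊕ Fin m → ℂ) f ≠ 0}).Nonempty :=
    ⟨⟨v, hv⟩, hne⟩
  obtain ⟨⟨w, hw⟩, hwU, hwS⟩ := (dense_iff_inter_open.mp (dense_sat m)) _ hUo hUne
  obtain ⟨g, d, e, hwe⟩ := hwS
  apply hwU
  show eval w f = 0
  have hwe' : w = actOne m g (Sum.elim (fun _ => d) fun _ => e) := hwe
  rw [hwe', hinv g _ (fun i j => by simp), hvan d e]
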